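/- Let G be a finite nonsolvable just non-Dedekind (JND) group and let K be its monolith. Then there exist a finite nonabelian simple group H and a natural number r ≥ 1 such that K is isomorphic to the direct product of r copies of H; moreover, K is perfect (K equals its own commutator subgroup). -/

import Mathlib

section Aux
variable {G : Type*} [Group G]

/-- decomposition of elements of a join of commuting subgroups -/
theorem sup_mem_decomp {N R : Subgroup G}
    (h : ∀ n ∈ N, ∀ r ∈ R, Commute n r) {x : G} (hx : x ∈ N ⊔ R) :
    ∃ n ∈ N, ∃ r ∈ R, x = n * r := by
  let T : Subgroup G :=
  { carrier := {x | ∃ n ∈ N, ∃ r ∈ R, x = n * r}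
    one_mem' := ⟨1, N.one_mem, 1, R.one_mem, by simp⟩
    mul_mem' := by
      rintro a b ⟨n1, hn1, r1, hr1, rfl⟩ ⟨n2, hn2, r2, hr2, rfl⟩
      refine ⟨n1 * n2, N.mul_mem hn1 hn2, r1 * r2, R.mul_mem hr1 hr2, ?_⟩
      have hc : r1 * n2 = n2 * r1 := (h n2 hn2 r1 hr1).symm.eq
      rw [mul_assoc, ← mul_assoc r1, hc, mul_assoc, ← mul_assoc]
    inv_mem' := by
      rintro a ⟨n, hn, r, hr, rfl⟩
      refine ⟨n⁻¹, N.inv_mem hn, r⁻¹, R.inv_mem hr, ?_⟩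
      rw [mul_inv_rev, (h n⁻¹ (N.inv_mem hn) r⁻¹ (R.inv_mem hr)).eq] }
  have hT : N ⊔ R ≤ T := sup_le (fun n hn => ⟨n, hn, 1, R.one_mem, by simp⟩)
    (fun r hr => ⟨1, N.one_mem, r, hr, by simp⟩)
  exact hT hx

theorem subgroup_eq_of_le_of_card_le [Finite G] {H K : Subgroup G} (h : H ≤ K)
    (hc : Nat.card K ≤ Nat.card H) : H = K := by
  apply SetLike.coe_injective
  exact Set.eq_of_subset_of_ncard_le h (by rw [← Nat.card_coe_set_eq, ← Nat.card_coe_set_eq]; exact hc)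
    (Set.toFinite _)

theorem subgroup_card_lt_of_lt [Finite G] {H K : Subgroup G} (h : H < K) :
    Nat.card H < Nat.card K := by
  have h1 : Nat.card H = (H : Set G).ncard := Nat.card_coe_set_eq _
  have h2 : Nat.card K = (K : Set G).ncard := Nat.card_coe_set_eq _
  rw [h1, h2]
  exact Set.ncard_lt_ncard (by exact_mod_cast SetLike.coe_ssubset_coe.mpr h) (Set.toFinite _)

theorem isSimpleGroup_of_mulEquiv {A B : Type*} [Group A] [Group B] (e : A ≃* B)
    [hB : IsSimpleGroup B] : IsSimpleGroup A := by
  have : Nontrivial A := e.toEquiv.nontrivial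
  refine ⟨fun N hN => ?_⟩
  have hNm : (N.map e.toMonoidHom).Normal := Subgroup.Normal.map hN e.toMonoidHom e.surjective
  rcases hB.eq_bot_or_eq_top_of_normal _ hNm with hb | ht
  · left
    have := congrArg (Subgroup.comap e.toMonoidHom) hb
    rwa [Subgroup.comap_map_eq_self_of_injective e.injective, MonoidHom.comap_bot,
      (MonoidHom.ker_eq_bot_iff _).mpr e.injective] at this
  · right
    have := congrArg (Subgroup.comap e.toMonoidHom) ht
    rwa [Subgroup.comap_map_eq_self_of_injective e.injective, Subgroup.comap_top] at this

end Aux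

/-- A group is Dedekind if every subgroup of it is normal. -/
def IsDedekind (G : Type*) [Group G] : Prop := ∀ H : Subgroup G, H.Normal

/-- A group is just non-Dedekind (JND) if it is not Dedekind but every quotient
by a nontrivial normal subgroup is Dedekind. -/
def IsJND (G : Type*) [Group G] : Prop :=
  ¬ IsDedekind G ∧
    ∀ (N : Subgroup G) (hN : N.Normal), N ≠ ⊥ →
      letI := hN
      IsDedekind (G ⧸ N)

theorem IsDedekind.isSolvable {A : Type*} [Group A] [Finite A] (h : IsDedekind A) :
    IsSolvable A := by
  have h4 : ∀ (p : ℕ) (_ : Fact p.Prime) (P : Sylow p A), (↑P : Subgroup A).Normal :=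
    fun _ _ P => h ↑P
  have hnil : Group.IsNilpotent A :=
    ((isNilpotent_of_finite_tfae (G := A)).out 0 3).mpr h4
  exact @IsNilpotent.to_isSolvable A _ hnil

/-- The monolith of a finite nonsolvable JND group is a direct product of copies of a
finite nonabelian simple group; moreover it is perfect. -/
theorem monolith_of_nonsolvable_jnd {G : Type*} [Group G] [Finite G]
    (hns : ¬ IsSolvable G) (hG : IsJND G)
    (K : Subgroup G) (hKn : K.Normal) (hKbot : K ≠ ⊥)
    (hKmono : ∀ N : Subgroup G, N.Normal → N ≠ ⊥ → K ≤ N) :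
    ∃ (H : Type) (_ : Group H) (r : ℕ), Finite H ∧ IsSimpleGroup H ∧
      (¬ ∀ a b : H, a * b = b * a) ∧ 1 ≤ r ∧
      Nonempty (K ≃* (Fin r → H)) ∧ ⁅K, K⁆ = K := by
  classical
  letI := hKn
  -- K is not elementwise commutative
  have habel : ¬ (∀ x ∈ K, ∀ y ∈ K, x * y = y * x) := by
    intro hcomm
    apply hns
    letI : CommGroup K :=
      { (inferInstance : Group K) with
        mul_comm := fun a b => Subtype.ext (hcomm a a.2 b b.2) }
    have h1 : IsSolvable K := Group.isSolvable_of_comm fun a b => Subtype.ext (hcomm a a.2 b b.2)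
    have h2 : IsSolvable (G ⧸ K) := (hG.2 K hKn hKbot).isSolvable
    exact solvable_of_ker_le_range K.subtype (QuotientGroup.mk' K)
      (by rw [QuotientGroup.ker_mk', Subgroup.range_subtype]) (hG' := h1) (hG'' := h2)
  -- K is perfect
  have hperf : ⁅K, K⁆ = K := by
    rcases eq_or_ne ⁅K, K⁆ ⊥ with hb | hb
    · exfalso
      apply habel
      intro x hx y hy
      have hxc := Subgroup.commutator_eq_bot_iff_le_centralizer.mp hb hx
      exact (Subgroup.mem_centralizer_iff.mp hxc y hy).symm
    · exact le_antisymm (Subgroup.commutator_le_right K K) (hKmono _ inferInstance hb)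
  -- elementwise commutativity of K is now refuted; record as: K nonabelian
  -- `KI P` : P is invariant under conjugation by elements of K
  set KI : Subgroup G → Prop := fun P => ∀ k ∈ K, ∀ x ∈ P, k * x * k⁻¹ ∈ P with hKI
  set NK : Subgroup G → Prop := fun P => P ≤ K ∧ KI P with hNK
  -- a minimal nontrivial K-invariant subgroup of K
  obtain ⟨S, ⟨⟨hSK, hSI⟩, hSbot⟩, hSmin⟩ :
      ∃ S, (NK S ∧ S ≠ ⊥) ∧ ∀ Q, NK Q → Q ≠ ⊥ → Q ≤ S → Q = S := by
    have hfin : ({P | NK P ∧ P ≠ ⊥} : Set (Subgroup G)).Finite := Set.toFinite _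
    have hne : ({P | NK P ∧ P ≠ ⊥} : Set (Subgroup G)).Nonempty :=
      ⟨K, ⟨le_rfl, fun k _ x hx => hKn.conj_mem x hx k⟩, hKbot⟩
    obtain ⟨S, hS, hmin⟩ := Set.Finite.exists_minimalFor
      (fun P : Subgroup G => Nat.card P) _ hfin hne
    refine ⟨S, hS, fun Q hQ1 hQ2 hQle => ?_⟩
    have hcard := Subgroup.card_le_of_le hQle
    have := hmin (j := Q) ⟨hQ1, hQ2⟩ hcard
    exact subgroup_eq_of_le_of_card_le hQle this
  -- conjugate copies of S
  set Cg : G → Subgroup G := fun g => S.comap (MulAut.conj g⁻¹).toMonoidHom with hCg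
  have hmemCg : ∀ g x, x ∈ Cg g ↔ g⁻¹ * x * g ∈ S := by
    intro g x
    simp [hCg, Subgroup.mem_comap, MulAut.conj_apply]
  have hCgNK : ∀ g, NK (Cg g) := by
    intro g
    constructor
    · intro x hx
      rw [hmemCg] at hx
      have h1 : g * (g⁻¹ * x * g) * g⁻¹ ∈ K := hKn.conj_mem _ (hSK hx) g
      have h2 : g * (g⁻¹ * x * g) * g⁻¹ = x := by group
      rwa [h2] at h1
    · intro k hk x hx
      rw [hmemCg] at hx ⊢
      have hk' : g⁻¹ * k * g ∈ K := by
        have := hKn.conj_mem k hk g⁻¹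
        simpa using this
      have h1 : (g⁻¹ * k * g) * (g⁻¹ * x * g) * (g⁻¹ * k * g)⁻¹ ∈ S := hSI _ hk' _ hx
      have h2 : (g⁻¹ * k * g) * (g⁻¹ * x * g) * (g⁻¹ * k * g)⁻¹ = g⁻¹ * (k * x * k⁻¹) * g := by
        group
      rwa [h2] at h1
  have hCgbot : ∀ g, Cg g ≠ ⊥ := by
    intro g hg
    apply hSbot
    rw [eq_bot_iff]
    intro x hx
    have h1 : g * x * g⁻¹ ∈ Cg g := by
      rw [hmemCg]
      have : g⁻¹ * (g * x * g⁻¹) * g = x := by group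
      rwa [this]
    rw [hg, Subgroup.mem_bot] at h1
    have : x = g⁻¹ * (g * x * g⁻¹) * g := by group
    rw [this, h1]
    simpa using Subgroup.one_mem _
  have hCgmin : ∀ g Q, NK Q → Q ≠ ⊥ → Q ≤ Cg g → Q = Cg g := by
    intro g Q hQNK hQbot hQle
    -- pull Q back by conjugation by g
    set Q' : Subgroup G := Q.comap (MulAut.conj g).toMonoidHom with hQ'
    have hmemQ' : ∀ x, x ∈ Q' ↔ g * x * g⁻¹ ∈ Q := by
      intro x; simp [hQ', Subgroup.mem_comap, MulAut.conj_apply]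
    have hQ'le : Q' ≤ S := by
      intro x hx
      rw [hmemQ'] at hx
      have := hQle hx
      rw [hmemCg] at this
      have h2 : g⁻¹ * (g * x * g⁻¹) * g = x := by group
      rwa [h2] at this
    have hQ'NK : NK Q' := by
      obtain ⟨hQK, hQI⟩ := hQNK
      constructor
      · intro x hx
        rw [hmemQ'] at hx
        have h1 : g⁻¹ * (g * x * g⁻¹) * g ∈ K := by
          have := hKn.conj_mem _ (hQK hx) g⁻¹
          simpa using this
        have h2 : g⁻¹ * (g * x * g⁻¹) * g = x := by group
        rwa [h2] at h1
      · intro k hk x hx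
        rw [hmemQ'] at hx ⊢
        have hk' : g * k * g⁻¹ ∈ K := hKn.conj_mem k hk g
        have h1 : (g * k * g⁻¹) * (g * x * g⁻¹) * (g * k * g⁻¹)⁻¹ ∈ Q := hQI _ hk' _ hx
        have h2 : (g * k * g⁻¹) * (g * x * g⁻¹) * (g * k * g⁻¹)⁻¹ = g * (k * x * k⁻¹) * g⁻¹ := by
          group
        rwa [h2] at h1
    have hQ'bot : Q' ≠ ⊥ := by
      intro hb
      apply hQbot
      rw [eq_bot_iff]
      intro x hx
      have h1 : g⁻¹ * x * g ∈ Q' := by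
        rw [hmemQ']
        have : g * (g⁻¹ * x * g) * g⁻¹ = x := by group
        rwa [this]
      rw [hb, Subgroup.mem_bot] at h1
      have : x = g * (g⁻¹ * x * g) * g⁻¹ := by group
      rw [this, h1]
      simpa using Subgroup.one_mem _
    have hQ'S : Q' = S := hSmin Q' hQ'NK hQ'bot hQ'le
    -- now conclude Cg g ≤ Q
    have : Cg g ≤ Q := by
      intro x hx
      rw [hmemCg] at hx
      rw [← hQ'S, hmemQ'] at hx
      have h2 : g * (g⁻¹ * x * g) * g⁻¹ = x := by group
      rwa [h2] at hx
    exact le_antisymm hQle this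
  -- the copies generate K
  have hJ : (⨆ g : G, Cg g) = K := by
    have hle : (⨆ g : G, Cg g) ≤ K := iSup_le fun g => (hCgNK g).1
    have hnormal : (⨆ g : G, Cg g).Normal := by
      constructor
      intro x hx h
      refine Subgroup.iSup_induction (C := fun y => h * y * h⁻¹ ∈ ⨆ g : G, Cg g) _ hx ?_ ?_ ?_
      · intro g y hy
        have : h * y * h⁻¹ ∈ Cg (h * g) := by
          rw [hmemCg]
          rw [hmemCg] at hy
          have h2 : (h * g)⁻¹ * (h * y * h⁻¹) * (h * g) = g⁻¹ * y * g := by group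
          rwa [h2]
        exact Subgroup.mem_iSup_of_mem (h * g) this
      · simpa using Subgroup.one_mem _
      · intro a b ha hb
        have : h * (a * b) * h⁻¹ = (h * a * h⁻¹) * (h * b * h⁻¹) := by group
        rw [this]
        exact Subgroup.mul_mem _ ha hb
    have hbot : (⨆ g : G, Cg g) ≠ ⊥ := by
      intro hb
      apply hCgbot 1
      rw [eq_bot_iff]
      intro x hx
      exact hb ▸ Subgroup.mem_iSup_of_mem (1 : G) hx
    exact le_antisymm hle (hKmono _ hnormal hbot)
  -- two K-invariant subgroups of K with trivial intersection commute elementwise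
  have hcommPQ : ∀ P Q : Subgroup G, NK P → NK Q → P ⊓ Q = ⊥ →
      ∀ p ∈ P, ∀ q ∈ Q, Commute p q := by
    rintro P Q ⟨hPK, hPI⟩ ⟨hQK, hQI⟩ hPQ p hp q hq
    have hc1 : p * q * p⁻¹ * q⁻¹ ∈ P := by
      have h1 : q * p⁻¹ * q⁻¹ ∈ P := hPI q (hQK hq) p⁻¹ (P.inv_mem hp)
      have h2 : p * (q * p⁻¹ * q⁻¹) = p * q * p⁻¹ * q⁻¹ := by group
      exact h2 ▸ P.mul_mem hp h1
    have hc2 : p * q * p⁻¹ * q⁻¹ ∈ Q := by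
      have h1 : p * q * p⁻¹ ∈ Q := hQI p (hPK hp) q hq
      exact Q.mul_mem h1 (Q.inv_mem hq)
    have hc : p * q * p⁻¹ * q⁻¹ = 1 := by
      have := hPQ ▸ (Subgroup.mem_inf.mpr ⟨hc1, hc2⟩)
      exact Subgroup.mem_bot.mp this
    have h1 : p * q * p⁻¹ = q := by rwa [mul_inv_eq_one] at hc
    show p * q = q * p
    calc p * q = (p * q * p⁻¹) * p := by group
      _ = q * p := by rw [h1]
  -- finite collections of copies forming a direct product
  set MS : Finset (Subgroup G) → Subgroup G := fun s => s.sup id with hMS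
  set Valid : Finset (Subgroup G) → Prop := fun s =>
    (∀ P ∈ s, ∃ g, P = Cg g) ∧ (∀ P ∈ s, P ⊓ MS (s.erase P) = ⊥) with hValid
  have hMSleK : ∀ s : Finset (Subgroup G), (∀ P ∈ s, ∃ g, P = Cg g) → MS s ≤ K := by
    intro s hs
    refine Finset.sup_le fun P hP => ?_
    obtain ⟨g, rfl⟩ := hs P hP
    exact (hCgNK g).1
  have hMSKI : ∀ s : Finset (Subgroup G), (∀ P ∈ s, ∃ g, P = Cg g) → KI (MS s) := by
    intro s hs k hk x hx
    have hle : MS s ≤ Subgroup.comap (MulAut.conj k).toMonoidHom (MS s) := by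
      refine Finset.sup_le fun P hP => ?_
      have hPle : P ≤ Subgroup.comap (MulAut.conj k).toMonoidHom P := by
        intro y hy
        rw [Subgroup.mem_comap]
        obtain ⟨g, rfl⟩ := hs P hP
        have := (hCgNK g).2 k hk y hy
        simpa [MulAut.conj_apply] using this
      exact le_trans hPle (Subgroup.comap_mono (Finset.le_sup (f := id) hP))
    have := hle hx
    rw [Subgroup.mem_comap] at this
    simpa [MulAut.conj_apply] using this
  -- choose a maximal valid family
  have hValid_singleton : Valid {S} := by
    constructor
    · intro P hP
      rw [Finset.mem_singleton] at hP
      refine ⟨1, ?_⟩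
      subst hP
      ext x
      rw [hmemCg]
      simp
    · intro P hP
      rw [Finset.mem_singleton] at hP
      subst hP
      simp [hMS]
  letI : Finite (Finset (Subgroup G)) :=
    Finite.of_injective (fun t : Finset (Subgroup G) => (t : Set (Subgroup G)))
      Finset.coe_injective
  obtain ⟨s, hsV, hsmax⟩ := Set.Finite.exists_maximalFor
    (fun s : Finset (Subgroup G) => Nat.card (MS s)) {s | Valid s} (Set.toFinite _)
    ⟨{S}, hValid_singleton⟩
  -- the maximal valid family generates all of K
  have hMSK : MS s = K := by
    by_contra hne
    have hle : MS s ≤ K := hMSleK s hsV.1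
    -- find a copy not inside MS s
    have : ¬ (⨆ g : G, Cg g) ≤ MS s := fun h => hne (le_antisymm hle (hJ ▸ h))
    obtain ⟨g, hg⟩ : ∃ g : G, ¬ Cg g ≤ MS s := by
      by_contra hall
      push_neg at hall
      exact this (iSup_le hall)
    set N := Cg g with hN
    have hNM : N ⊓ MS s = ⊥ := by
      rcases eq_or_ne (N ⊓ MS s) ⊥ with h | h
      · exact h
      · exfalso
        have hNK' : NK (N ⊓ MS s) := by
          refine ⟨le_trans inf_le_left (hCgNK g).1, ?_⟩
          intro k hk x hx
          rw [Subgroup.mem_inf] at hx ⊢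
          exact ⟨(hCgNK g).2 k hk x hx.1, hMSKI s hsV.1 k hk x hx.2⟩
        have := hCgmin g _ hNK' h inf_le_left
        exact hg (le_of_eq_of_le this.symm inf_le_right)
    have hNnotins : N ∉ s := by
      intro hmem
      have : N ≤ MS s := Finset.le_sup (f := id) hmem
      rw [inf_eq_left.mpr this] at hNM
      exact hCgbot g hNM
    -- members of s commute with N elementwise
    have hMScent : ∀ Q ∈ s, ∀ q ∈ Q, ∀ n ∈ N, Commute n q := by
      intro Q hQ q hq n hn
      obtain ⟨g', rfl⟩ := hsV.1 Q hQ
      have hNQ : N ⊓ Cg g' = ⊥ := by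
        rw [eq_bot_iff, ← hNM]
        exact inf_le_inf_left N (Finset.le_sup (f := id) hQ)
      exact hcommPQ N (Cg g') (hCgNK g) (hCgNK g') hNQ n hn q hq
    -- the extended family is valid
    have hsV' : Valid (insert N s) := by
      constructor
      · intro P hP
        rcases Finset.mem_insert.mp hP with h | h
        · exact ⟨g, h⟩
        · exact hsV.1 P h
      · intro P hP
        rcases Finset.mem_insert.mp hP with h | h
        · subst h
          rwa [Finset.erase_insert hNnotins]
        · have hPneN : P ≠ N := fun hPN => hNnotins (hPN ▸ h)
          have hNeP : N ≠ P := fun hNP => hNnotins (hNP ▸ h)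
          rw [Finset.erase_insert_of_ne hNeP]
          rw [show MS (insert N (s.erase P)) = N ⊔ MS (s.erase P) from Finset.sup_insert]
          rw [eq_bot_iff]
          intro x hx
          rw [Subgroup.mem_inf] at hx
          obtain ⟨hxP, hxNR⟩ := hx
          have hcomm : ∀ n ∈ N, ∀ r ∈ MS (s.erase P), Commute n r := by
            intro n hn r hr
            have hrM : MS (s.erase P) ≤ Subgroup.centralizer N := by
              refine Finset.sup_le fun Q hQ => ?_
              intro q hq
              rw [Subgroup.mem_centralizer_iff]
              intro m hm
              exact (hMScent Q (Finset.mem_of_mem_erase hQ) q hq m hm).eq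
            exact Subgroup.mem_centralizer_iff.mp (hrM hr) n hn
          obtain ⟨n, hn, r, hr, rfl⟩ := sup_mem_decomp (N := N) (R := MS (s.erase P)) hcomm hxNR
          -- now n = (n * r) * r⁻¹ ∈ N ⊓ MS s = ⊥
          have hsub : MS (s.erase P) ≤ MS s := Finset.sup_mono (Finset.erase_subset P s)
          have hrMS : r ∈ MS s := hsub hr
          have hxMS : n * r ∈ MS s := (Finset.le_sup (f := id) h : P ≤ MS s) hxP
          have hnMS : n ∈ MS s := by
            have : n = (n * r) * r⁻¹ := by group
            rw [this]
            exact (MS s).mul_mem hxMS ((MS s).inv_mem hrMS)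
          have hn1 : n = 1 := Subgroup.mem_bot.mp (hNM ▸ Subgroup.mem_inf.mpr ⟨hn, hnMS⟩)
          subst hn1
          rw [one_mul] at hxP ⊢
          have hbot := hsV.2 P h
          have hmem : r ∈ P ⊓ MS (s.erase P) := Subgroup.mem_inf.mpr ⟨hxP, hr⟩
          rwa [hbot] at hmem
    -- contradiction with maximality
    have hlt : Nat.card (MS s) < Nat.card (MS (insert N s)) := by
      apply subgroup_card_lt_of_lt
      rw [show MS (insert N s) = N ⊔ MS s from Finset.sup_insert]
      refine lt_of_le_of_ne le_sup_right fun hEq => ?_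
      exact hg (hEq ▸ le_sup_left)
    have : Nat.card (MS (insert N s)) ≤ Nat.card (MS s) := hsmax (j := insert N s) hsV' (le_of_lt hlt)
    omega
  -- s is nonempty
  have hNKmem : ∀ P ∈ s, NK P := by
    intro P hP
    obtain ⟨g, rfl⟩ := hsV.1 P hP
    exact hCgNK g
  have hsne : s.Nonempty := by
    rcases Finset.eq_empty_or_nonempty s with h | h
    · exfalso
      apply hKbot
      rw [← hMSK, h]
      simp [hMS]
    · exact h
  have hr1 : 1 ≤ s.card := Finset.card_pos.mpr hsne
  letI : Fintype {x : Subgroup G // x ∈ s} := FinsetCoe.fintype s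
  set fam : {x : Subgroup G // x ∈ s} → Subgroup G := fun i => (i : Subgroup G) with hfam
  have hfamNK : ∀ i, NK (fam i) := fun i => hNKmem i.1 i.2
  have hinterfam : ∀ i : {x : Subgroup G // x ∈ s}, ∀ Q ∈ s.erase (fam i), fam i ⊓ Q = ⊥ := by
    intro i Q hQ
    have h1 : fam i ⊓ Q ≤ fam i ⊓ MS (s.erase (fam i)) :=
      inf_le_inf_left _ (Finset.le_sup (f := id) hQ)
    rw [hsV.2 (fam i) i.2] at h1
    exact le_bot_iff.mp h1
  have hpair : Pairwise fun i j : {x : Subgroup G // x ∈ s} =>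
      ∀ x y : G, x ∈ fam i → y ∈ fam j → Commute x y := by
    intro i j hij x y hx hy
    have hne' : fam j ≠ fam i := fun h => hij (Subtype.ext h.symm)
    have hmem : fam j ∈ s.erase (fam i) := Finset.mem_erase.mpr ⟨hne', j.2⟩
    exact hcommPQ _ _ (hfamNK i) (hfamNK j) (hinterfam i (fam j) hmem) x hx y hy
  have hind : iSupIndep fam := by
    intro i
    rw [disjoint_iff]
    have h2 : (⨆ j, ⨆ _ : j ≠ i, fam j) ≤ MS (s.erase (fam i)) := by
      refine iSup_le fun j => iSup_le fun hji => ?_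
      have hmem : fam j ∈ s.erase (fam i) :=
        Finset.mem_erase.mpr ⟨fun h => hji (Subtype.ext h), j.2⟩
      exact Finset.le_sup (f := id) hmem
    have h1 : fam i ⊓ (⨆ j, ⨆ _ : j ≠ i, fam j) ≤ fam i ⊓ MS (s.erase (fam i)) :=
      inf_le_inf_left _ h2
    rw [hsV.2 (fam i) i.2] at h1
    exact le_bot_iff.mp h1
  have hsupfam : (⨆ i, fam i) = MS s :=
    le_antisymm (iSup_le fun i => Finset.le_sup (f := id) i.2)
      (Finset.sup_le fun P hP => le_iSup fam ⟨P, hP⟩)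
  let φ := Subgroup.noncommPiCoprod hpair
  have hinj : Function.Injective φ := Subgroup.injective_noncommPiCoprod_of_iSupIndep hind
  have hrange : φ.range = K := by
    rw [show φ.range = ⨆ i, fam i from Subgroup.noncommPiCoprod_range, hsupfam, hMSK]
  -- the chosen factor
  obtain ⟨P0v, hP0v⟩ := hsne
  set i0 : {x : Subgroup G // x ∈ s} := ⟨P0v, hP0v⟩ with hi0
  set P0 : Subgroup G := fam i0 with hP0
  -- everything in the rest of the family centralizes P0
  have hRcent : MS (s.erase P0) ≤ Subgroup.centralizer P0 := by
    refine Finset.sup_le fun Q hQ => ?_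
    intro q hq
    rw [Subgroup.mem_centralizer_iff]
    intro p hp
    exact (hcommPQ P0 Q (hfamNK i0) (hNKmem Q (Finset.mem_of_mem_erase hQ))
      (hinterfam i0 Q hQ) p hp q hq).eq
  -- decomposition of elements of K
  have hKdecomp : ∀ k ∈ K, ∃ p ∈ P0, ∃ y ∈ MS (s.erase P0), k = p * y := by
    intro k hk
    have hk' : k ∈ P0 ⊔ MS (s.erase P0) := by
      have : MS s = P0 ⊔ MS (s.erase P0) := by
        conv_lhs => rw [show s = insert P0 (s.erase P0) from (Finset.insert_erase hP0v).symm]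
        exact Finset.sup_insert
      rw [← this, hMSK]
      exact hk
    refine sup_mem_decomp ?_ hk'
    intro p hp y hy
    exact Subgroup.mem_centralizer_iff.mp (hRcent hy) p hp
  have hP0bot : P0 ≠ ⊥ := by
    obtain ⟨g, hg⟩ := hsV.1 P0 i0.2
    rw [hg]
    exact hCgbot g
  -- P0 is simple
  have hsimpleP0 : IsSimpleGroup P0 := by
    have hntP0 : Nontrivial P0 := (Subgroup.nontrivial_iff_ne_bot P0).mpr hP0bot
    refine ⟨fun C hC => ?_⟩
    set D := C.map P0.subtype with hD
    have hDle : D ≤ P0 := Subgroup.map_subtype_le C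
    rcases eq_or_ne C ⊥ with h | h
    · exact Or.inl h
    right
    have hDbot : D ≠ ⊥ := by
      intro hb
      rw [hD, C.map_eq_bot_iff_of_injective (Subgroup.subtype_injective P0)] at hb
      exact h hb
    have hDNK : NK D := by
      refine ⟨le_trans hDle (hfamNK i0).1, ?_⟩
      intro k hk x hx
      obtain ⟨p, hp, y, hy, rfl⟩ := hKdecomp k hk
      have hyx : y * x * y⁻¹ = x := by
        have h1 : x * y = y * x := Subgroup.mem_centralizer_iff.mp (hRcent hy) x (hDle hx)
        rw [← h1]
        exact mul_inv_cancel_right x y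
      have h2 : (p * y) * x * (p * y)⁻¹ = p * (y * x * y⁻¹) * p⁻¹ := by group
      rw [h2, hyx]
      obtain ⟨c, hc, rfl⟩ := Subgroup.mem_map.mp hx
      exact Subgroup.mem_map.mpr
        ⟨(⟨p, hp⟩ : P0) * c * (⟨p, hp⟩ : P0)⁻¹, hC.conj_mem c hc ⟨p, hp⟩, rfl⟩
    have hDP0 : D = P0 := by
      obtain ⟨g, hg⟩ := hsV.1 P0 i0.2
      rw [hg] at hDle ⊢
      exact hCgmin g D hDNK hDbot hDle
    have htop : C.map P0.subtype = (⊤ : Subgroup P0).map P0.subtype := by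
      rw [← MonoidHom.range_eq_map, Subgroup.range_subtype]
      exact hDP0
    exact Subgroup.map_injective (Subgroup.subtype_injective P0) htop
  -- each member of the family is isomorphic to P0 (both conjugates of S)
  have hfamiso : ∀ i, Nonempty ((fam i : Subgroup G) ≃* P0) := by
    intro i
    obtain ⟨g, hg⟩ := hsV.1 (fam i) i.2
    obtain ⟨g0, hg0⟩ := hsV.1 P0 i0.2
    -- fam i ≃* S ≃* P0 via conjugation equivalences
    have e1 : ∀ g' : G, Nonempty (S ≃* (Cg g' : Subgroup G)) := by
      intro g'
      have hcomap : (Cg g' : Subgroup G) = S.map ((MulAut.conj g'⁻¹).symm).toMonoidHom := by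
        rw [hCg]
        exact Subgroup.comap_equiv_eq_map_symm' _ S
      exact ⟨(MulEquiv.subgroupMap ((MulAut.conj g'⁻¹).symm : G ≃* G) S).trans
        (MulEquiv.subgroupCongr hcomap.symm)⟩
    obtain ⟨ei⟩ := e1 g
    obtain ⟨e0⟩ := e1 g0
    exact ⟨(MulEquiv.subgroupCongr hg).trans (ei.symm.trans (e0.trans
      (MulEquiv.subgroupCongr hg0.symm)))⟩
  -- transfer P0 to a group structure on a `Type 0` carrier
  haveI hsmall : Small.{0} (P0 : Subgroup G) := inferInstance
  have eH : Shrink.{0} (P0 : Subgroup G) ≃* (P0 : Subgroup G) := Shrink.mulEquiv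
  haveI := hsimpleP0
  have hsimpleH : IsSimpleGroup (Shrink.{0} (P0 : Subgroup G)) := isSimpleGroup_of_mulEquiv eH
  have hfinH : Finite (Shrink.{0} (P0 : Subgroup G)) :=
    Finite.of_equiv _ (equivShrink (P0 : Subgroup G))
  -- assemble the isomorphism K ≃* (Fin s.card → Shrink.{0} (P0 : Subgroup G))
  have e2 : (∀ i, (fam i : Subgroup G)) ≃* K :=
    (MonoidHom.ofInjective hinj).trans (MulEquiv.subgroupCongr hrange)
  have e3 : (∀ i, (fam i : Subgroup G)) ≃* (∀ _ : {x : Subgroup G // x ∈ s}, Shrink.{0} (P0 : Subgroup G)) :=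
    MulEquiv.piCongrRight fun i => (Classical.choice (hfamiso i)).trans eH.symm
  let eidx : {x : Subgroup G // x ∈ s} ≃ Fin s.card := s.equivFin
  let e4 : (∀ _ : {x : Subgroup G // x ∈ s}, Shrink.{0} (P0 : Subgroup G)) ≃* (Fin s.card → Shrink.{0} (P0 : Subgroup G)) :=
    { toFun := fun f j => f (eidx.symm j)
      invFun := fun f i => f (eidx i)
      left_inv := fun f => funext fun i => by simp
      right_inv := fun f => funext fun j => by simp
      map_mul' := fun f g => rfl }
  have eqK : K ≃* (Fin s.card → Shrink.{0} (P0 : Subgroup G)) := (e2.symm.trans e3).trans e4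
  refine ⟨Shrink.{0} (P0 : Subgroup G), inferInstance, s.card, hfinH, hsimpleH, ?_, hr1, ⟨eqK⟩, hperf⟩
  -- nonabelian
  intro hab
  apply habel
  intro x hx y hy
  have hxy : (⟨x, hx⟩ : K) * ⟨y, hy⟩ = ⟨y, hy⟩ * ⟨x, hx⟩ := by
    apply eqK.injective
    rw [map_mul, map_mul]
    funext j
    exact hab _ _
  have := congrArg (Subtype.val) hxy
  simpa using this
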